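/- arXiv:1003.4072 — 4 statements merged into one kernel-verified Lean document; each statement's English description precedes it below -/
import Mathlib

section
/- For any positive integers w1, w2, w3, any complex numbers y1, y2, y3, and any nonnegative integer n, the quantity Σ_{k+l+m=n} (n choose k,l,m) E_{k,χ}(w_{σ(1)} y1) E_{l,χ}(w_{σ(2)} y2) E_{m,χ}(w_{σ(3)} y3) w_{σ(1)}^{l+m} w_{σ(2)}^{k+m} w_{σ(3)}^{k+l} is the same for all six permutations σ of {1,2,3}; in particular Σ_{k+l+m=n} (n choose k,l,m) E_{k,χ}(w1 y1) E_{l,χ}(w2 y2) E_{m,χ}(w3 y3) w1^{l+m} w2^{k+m} w3^{k+l} is invariant under all permutations of (w1, w2, w3). -/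
open Finset

/-- The formal exponential power series `e^{ct} = Σ cⁿ tⁿ/n!` in `ℂ[[t]]`. -/
noncomputable def expPS (c : ℂ) : PowerSeries ℂ :=
  PowerSeries.mk fun n => c ^ n / n.factorial

/-- `Σ_{a=0}^{d-1} (-1)^a χ(a) e^{at}` as a formal power series. -/
noncomputable def altSum (χ : ℤ → ℂ) (d : ℕ) : PowerSeries ℂ :=
  ∑ a ∈ Finset.range d, ((-1 : ℂ) ^ a * χ (a : ℤ)) • expPS (a : ℂ)

/-- `E` is the family of generalized Euler polynomials attached to `χ` mod `d`:
`(Σ_{n≥0} E_{n,χ}(x) tⁿ/n!) · (e^{dt}+1) = 2 e^{xt} · Σ_{a=0}^{d-1} (-1)^a χ(a) e^{at}`. -/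
def IsGenEuler (d : ℕ) (χ : ℤ → ℂ) (E : ℕ → ℂ → ℂ) : Prop :=
  ∀ x : ℂ, (PowerSeries.mk fun n => E n x / n.factorial) * (expPS (d : ℂ) + 1)
    = (2 : PowerSeries ℂ) * expPS x * altSum χ d

/-- The alternating generalized power sum `T_k(n,χ) = Σ_{a=0}^{n} (-1)^a χ(a) a^k`
(with the convention `0^0 = 1`). -/
noncomputable def altPowSum (χ : ℤ → ℂ) (k n : ℕ) : ℂ :=
  ∑ a ∈ Finset.range (n + 1), (-1 : ℂ) ^ a * χ (a : ℤ) * (a : ℂ) ^ k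

/-- The multinomial coefficient `(k+l+m)! / (k! l! m!)`. -/
def multinom (k l m : ℕ) : ℕ :=
  (k + l + m).factorial / (k.factorial * l.factorial * m.factorial)

/-! ### Auxiliary lemmas -/

lemma expPS_eq (a : ℂ) : expPS a = PowerSeries.rescale a (PowerSeries.exp ℂ) := by
  ext n
  simp [expPS, PowerSeries.coeff_rescale, PowerSeries.coeff_exp, div_eq_mul_inv]

lemma expPS_mul (a b : ℂ) : expPS a * expPS b = expPS (a + b) := by
  rw [expPS_eq, expPS_eq, expPS_eq, PowerSeries.exp_mul_exp_eq_exp_add]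

lemma rescale_expPS (c a : ℂ) : PowerSeries.rescale c (expPS a) = expPS (a * c) := by
  ext n
  simp [expPS, PowerSeries.coeff_rescale, mul_pow]
  ring

lemma constCoeff_expPS (a : ℂ) : PowerSeries.constantCoeff (expPS a) = 1 := by
  simp [expPS, ← PowerSeries.coeff_zero_eq_constantCoeff_apply]

/-- The exponential generating function of the Euler polynomials at `x`. -/
noncomputable def GE (E : ℕ → ℂ → ℂ) (x : ℂ) : PowerSeries ℂ :=
  PowerSeries.mk fun n => E n x / n.factorial

lemma scaledGE {d : ℕ} {χ : ℤ → ℂ} {E : ℕ → ℂ → ℂ} (hE : IsGenEuler d χ E) (x c : ℂ) :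
    PowerSeries.rescale c (GE E x) * (expPS ((d : ℂ) * c) + 1)
      = 2 * expPS (x * c) * PowerSeries.rescale c (altSum χ d) := by
  have h := congrArg (PowerSeries.rescale c) (hE x)
  rw [map_mul, map_add, map_one, map_mul, map_mul, rescale_expPS, rescale_expPS,
    map_ofNat] at h
  exact h

/-- Triple product of rescaled Euler generating functions. -/
noncomputable def TP (E : ℕ → ℂ → ℂ) (y1 y2 y3 c0 c1 c2 : ℂ) : PowerSeries ℂ :=
  PowerSeries.rescale (c1 * c2) (GE E (c0 * y1)) *
    (PowerSeries.rescale (c0 * c2) (GE E (c1 * y2)) *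
      PowerSeries.rescale (c0 * c1) (GE E (c2 * y3)))

noncomputable def QQ (d : ℕ) (c0 c1 c2 : ℂ) : PowerSeries ℂ :=
  (expPS ((d : ℂ) * (c1 * c2)) + 1) * (expPS ((d : ℂ) * (c0 * c2)) + 1) *
    (expPS ((d : ℂ) * (c0 * c1)) + 1)

noncomputable def RR (χ : ℤ → ℂ) (d : ℕ) (y1 y2 y3 c0 c1 c2 : ℂ) : PowerSeries ℂ :=
  8 * expPS (c0 * c1 * c2 * (y1 + y2 + y3)) *
    (PowerSeries.rescale (c1 * c2) (altSum χ d) * PowerSeries.rescale (c0 * c2) (altSum χ d) *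
      PowerSeries.rescale (c0 * c1) (altSum χ d))

lemma TP_mul_QQ {d : ℕ} {χ : ℤ → ℂ} {E : ℕ → ℂ → ℂ} (hE : IsGenEuler d χ E)
    (y1 y2 y3 c0 c1 c2 : ℂ) :
    TP E y1 y2 y3 c0 c1 c2 * QQ d c0 c1 c2 = RR χ d y1 y2 y3 c0 c1 c2 := by
  have h1 := scaledGE hE (c0 * y1) (c1 * c2)
  have h2 := scaledGE hE (c1 * y2) (c0 * c2)
  have h3 := scaledGE hE (c2 * y3) (c0 * c1)
  have e : TP E y1 y2 y3 c0 c1 c2 * QQ d c0 c1 c2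
      = (PowerSeries.rescale (c1 * c2) (GE E (c0 * y1)) * (expPS ((d : ℂ) * (c1 * c2)) + 1)) *
        ((PowerSeries.rescale (c0 * c2) (GE E (c1 * y2)) * (expPS ((d : ℂ) * (c0 * c2)) + 1)) *
          (PowerSeries.rescale (c0 * c1) (GE E (c2 * y3)) * (expPS ((d : ℂ) * (c0 * c1)) + 1))) := by
    unfold TP QQ; ring
  rw [e, h1, h2, h3]
  have hexp : expPS (c0 * y1 * (c1 * c2)) * expPS (c1 * y2 * (c0 * c2)) *
      expPS (c2 * y3 * (c0 * c1)) = expPS (c0 * c1 * c2 * (y1 + y2 + y3)) := by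
    rw [expPS_mul, expPS_mul]
    ring_nf
  unfold RR
  calc 2 * expPS (c0 * y1 * (c1 * c2)) * PowerSeries.rescale (c1 * c2) (altSum χ d) *
        (2 * expPS (c1 * y2 * (c0 * c2)) * PowerSeries.rescale (c0 * c2) (altSum χ d) *
          (2 * expPS (c2 * y3 * (c0 * c1)) * PowerSeries.rescale (c0 * c1) (altSum χ d)))
      = 8 * (expPS (c0 * y1 * (c1 * c2)) * expPS (c1 * y2 * (c0 * c2)) *
          expPS (c2 * y3 * (c0 * c1))) *
        (PowerSeries.rescale (c1 * c2) (altSum χ d) * PowerSeries.rescale (c0 * c2) (altSum χ d) *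
          PowerSeries.rescale (c0 * c1) (altSum χ d)) := by ring
    _ = _ := by rw [hexp]

lemma QQ_ne (d : ℕ) (c0 c1 c2 : ℂ) : QQ d c0 c1 c2 ≠ 0 := by
  intro h
  have h8 := congrArg (PowerSeries.constantCoeff) h
  rw [QQ, map_mul, map_mul, map_add, map_add, map_add, map_one, constCoeff_expPS,
    constCoeff_expPS, constCoeff_expPS, map_zero] at h8
  norm_num at h8

lemma TP_swap01 {d : ℕ} {χ : ℤ → ℂ} {E : ℕ → ℂ → ℂ} (hE : IsGenEuler d χ E)
    (y1 y2 y3 c0 c1 c2 : ℂ) :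
    TP E y1 y2 y3 c1 c0 c2 = TP E y1 y2 y3 c0 c1 c2 := by
  apply mul_right_cancel₀ (QQ_ne d c0 c1 c2)
  have hQ : QQ d c1 c0 c2 = QQ d c0 c1 c2 := by
    unfold QQ; rw [show c1 * c0 = c0 * c1 from mul_comm _ _]; ring
  have hR : RR χ d y1 y2 y3 c1 c0 c2 = RR χ d y1 y2 y3 c0 c1 c2 := by
    unfold RR; rw [show c1 * c0 = c0 * c1 from mul_comm _ _]; ring
  conv_lhs => rw [← hQ, TP_mul_QQ hE]
  rw [hR, TP_mul_QQ hE]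

lemma TP_swap12 {d : ℕ} {χ : ℤ → ℂ} {E : ℕ → ℂ → ℂ} (hE : IsGenEuler d χ E)
    (y1 y2 y3 c0 c1 c2 : ℂ) :
    TP E y1 y2 y3 c0 c2 c1 = TP E y1 y2 y3 c0 c1 c2 := by
  apply mul_right_cancel₀ (QQ_ne d c0 c1 c2)
  have hQ : QQ d c0 c2 c1 = QQ d c0 c1 c2 := by
    unfold QQ; rw [show c2 * c1 = c1 * c2 from mul_comm _ _]; ring
  have hR : RR χ d y1 y2 y3 c0 c2 c1 = RR χ d y1 y2 y3 c0 c1 c2 := by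
    unfold RR
    rw [show c0 * c2 * c1 = c0 * c1 * c2 by ring, show c2 * c1 = c1 * c2 from mul_comm _ _]
    ring
  conv_lhs => rw [← hQ, TP_mul_QQ hE]
  rw [hR, TP_mul_QQ hE]

lemma TP_perm {d : ℕ} {χ : ℤ → ℂ} {E : ℕ → ℂ → ℂ} (hE : IsGenEuler d χ E)
    (y1 y2 y3 : ℂ) (c : Fin 3 → ℂ) (σ : Equiv.Perm (Fin 3)) :
    TP E y1 y2 y3 (c (σ 0)) (c (σ 1)) (c (σ 2)) = TP E y1 y2 y3 (c 0) (c 1) (c 2) := by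
  have tri : ∀ i : Fin 3, i = 0 ∨ i = 1 ∨ i = 2 := by decide
  have hinj := σ.injective
  rcases tri (σ 0) with h0 | h0 | h0 <;> rcases tri (σ 1) with h1 | h1 | h1 <;>
    rcases tri (σ 2) with h2 | h2 | h2 <;> rw [h0, h1, h2] <;>
    first
    | rfl
    | exact absurd (hinj (h0.trans h1.symm)) (by decide)
    | exact absurd (hinj (h0.trans h2.symm)) (by decide)
    | exact absurd (hinj (h1.trans h2.symm)) (by decide)
    | exact TP_swap01 hE y1 y2 y3 _ _ _
    | exact TP_swap12 hE y1 y2 y3 _ _ _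
    | exact (TP_swap12 hE y1 y2 y3 _ _ _).trans (TP_swap01 hE y1 y2 y3 _ _ _)
    | exact (TP_swap01 hE y1 y2 y3 _ _ _).trans (TP_swap12 hE y1 y2 y3 _ _ _)
    | exact ((TP_swap01 hE y1 y2 y3 _ _ _).trans (TP_swap12 hE y1 y2 y3 _ _ _)).trans
        (TP_swap01 hE y1 y2 y3 _ _ _)

lemma multinom_mul {k l m : ℕ} :
    multinom k l m * (k.factorial * l.factorial * m.factorial) = (k + l + m).factorial := by
  apply Nat.div_mul_cancel
  calc k.factorial * l.factorial * m.factorial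
      ∣ (k + l).factorial * m.factorial :=
        mul_dvd_mul_right (Nat.factorial_mul_factorial_dvd_factorial_add k l) _
    _ ∣ (k + l + m).factorial := Nat.factorial_mul_factorial_dvd_factorial_add (k + l) m

lemma sum_eq_coeff (E : ℕ → ℂ → ℂ) (y1 y2 y3 c0 c1 c2 : ℂ) (n : ℕ) :
    (∑ k ∈ range (n + 1), ∑ l ∈ range (n + 1 - k),
      (multinom k l (n - k - l) : ℂ) * E k (c0 * y1) *
        E l (c1 * y2) * E (n - k - l) (c2 * y3) *
        c0 ^ (l + (n - k - l)) * c1 ^ (k + (n - k - l)) * c2 ^ (k + l))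
    = (n.factorial : ℂ) * (PowerSeries.coeff n) (TP E y1 y2 y3 c0 c1 c2) := by
  rw [TP, PowerSeries.coeff_mul, Finset.Nat.sum_antidiagonal_eq_sum_range_succ_mk,
    Finset.mul_sum]
  refine Finset.sum_congr rfl fun k hk => ?_
  have hkn : k ≤ n := by simpa [Nat.lt_succ_iff] using hk
  rw [PowerSeries.coeff_mul, Finset.Nat.sum_antidiagonal_eq_sum_range_succ_mk,
    show n + 1 - k = n - k + 1 by omega, Finset.mul_sum, Finset.mul_sum]
  refine Finset.sum_congr rfl fun l hl => ?_
  have hln : l ≤ n - k := by simpa [Nat.lt_succ_iff] using hl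
  set m := n - k - l with hm
  have hklm : k + l + m = n := by omega
  dsimp only
  rw [PowerSeries.coeff_rescale, PowerSeries.coeff_rescale, PowerSeries.coeff_rescale]
  rw [GE, GE, GE, PowerSeries.coeff_mk, PowerSeries.coeff_mk, PowerSeries.coeff_mk]
  have hkf : (k.factorial : ℂ) ≠ 0 := Nat.cast_ne_zero.2 k.factorial_ne_zero
  have hlf : (l.factorial : ℂ) ≠ 0 := Nat.cast_ne_zero.2 l.factorial_ne_zero
  have hmf : (m.factorial : ℂ) ≠ 0 := Nat.cast_ne_zero.2 m.factorial_ne_zero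
  have hmul : (multinom k l m : ℂ) * (k.factorial * l.factorial * m.factorial)
      = (n.factorial : ℂ) := by
    rw [← hklm]
    exact_mod_cast congrArg (Nat.cast (R := ℂ)) (multinom_mul (k := k) (l := l) (m := m))
  have hmc : (multinom k l m : ℂ)
      = (n.factorial : ℂ) / (k.factorial * l.factorial * m.factorial) := by
    rw [eq_div_iff (by simp [hkf, hlf, hmf])]
    exact hmul
  rw [hmc]
  field_simp
  ring

/-- Theorem 1: the triple sum with three generalized Euler polynomial factors is
invariant under all six permutations of `(w₁, w₂, w₃)`. -/
theorem stmt_0 (d : ℕ) (hd : Odd d) (hd0 : 0 < d) (χ : ℤ → ℂ)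
    (hper : ∀ a : ℤ, χ (a + d) = χ a)
    (hmul : ∀ a b : ℤ, χ (a * b) = χ a * χ b) (hone : χ 1 = 1)
    (hvan : ∀ a : ℤ, 1 < Int.gcd a d → χ a = 0)
    (E : ℕ → ℂ → ℂ) (hE : IsGenEuler d χ E)
    (w : Fin 3 → ℕ) (hw : ∀ i, 0 < w i) (y1 y2 y3 : ℂ) (n : ℕ)
    (σ : Equiv.Perm (Fin 3)) :
    (∑ k ∈ range (n + 1), ∑ l ∈ range (n + 1 - k),
      (multinom k l (n - k - l) : ℂ) * E k ((w (σ 0) : ℂ) * y1) *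
        E l ((w (σ 1) : ℂ) * y2) * E (n - k - l) ((w (σ 2) : ℂ) * y3) *
        (w (σ 0) : ℂ) ^ (l + (n - k - l)) * (w (σ 1) : ℂ) ^ (k + (n - k - l)) *
        (w (σ 2) : ℂ) ^ (k + l))
    = ∑ k ∈ range (n + 1), ∑ l ∈ range (n + 1 - k),
      (multinom k l (n - k - l) : ℂ) * E k ((w 0 : ℂ) * y1) *
        E l ((w 1 : ℂ) * y2) * E (n - k - l) ((w 2 : ℂ) * y3) *
        (w 0 : ℂ) ^ (l + (n - k - l)) * (w 1 : ℂ) ^ (k + (n - k - l)) *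
        (w 2 : ℂ) ^ (k + l) := by
  rw [sum_eq_coeff, sum_eq_coeff, TP_perm hE y1 y2 y3 (fun i => (w i : ℂ)) σ]
end

section
/- For any odd positive integers w1, w2, w3, any complex numbers y1, y2, and any nonnegative integer n, the quantity Σ_{k+l+m=n} (n choose k,l,m) E_{k,χ}(w_{σ(1)} y1) E_{l,χ}(w_{σ(2)} y2) T_m(w_{σ(3)} d − 1, χ) w_{σ(1)}^{l+m} w_{σ(2)}^{k+m} w_{σ(3)}^{k+l} is the same for all six permutations σ of {1,2,3}. -/
open Finset

namespace Stmt1Aux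

open PowerSeries

lemma expPS_eq (c : ℂ) : expPS c = rescale c (exp ℂ) := by
  ext n
  simp [expPS, coeff_rescale, coeff_exp, algebraMap, div_eq_mul_inv]

lemma expPS_mul (a b : ℂ) : expPS a * expPS b = expPS (a + b) := by
  simp [expPS_eq, exp_mul_exp_eq_exp_add]

lemma rescale_expPS (c a : ℂ) : rescale c (expPS a) = expPS (a * c) := by
  simp [expPS_eq, rescale_rescale]

lemma expPS_pow (a : ℂ) (k : ℕ) : expPS a ^ k = expPS (k * a) := by
  induction k with
  | zero => simp [expPS]
            ext n; simp [PowerSeries.coeff_one, coeff_mk]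
            rcases n with _|n <;> simp
  | succ k ih => rw [pow_succ, ih, expPS_mul, Nat.cast_succ]; ring_nf

lemma constantCoeff_expPS (a : ℂ) : constantCoeff (expPS a) = 1 := by
  simp [expPS, ← coeff_zero_eq_constantCoeff]

lemma Tser_eq (χ : ℤ → ℂ) (m : ℕ) (hm : 0 < m) :
    (PowerSeries.mk fun n => altPowSum χ n (m - 1) / n.factorial) = altSum χ m := by
  ext n
  have : m - 1 + 1 = m := Nat.succ_pred_eq_of_pos hm
  simp only [coeff_mk, altPowSum, altSum, this, map_sum, LinearMap.map_smul]
  rw [Finset.sum_div]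
  refine Finset.sum_congr rfl fun a _ => ?_
  simp [expPS, smul_eq_mul, mul_div_assoc]

lemma chi_period (χ : ℤ → ℂ) (d : ℕ) (hper : ∀ a : ℤ, χ (a + d) = χ a) (j b : ℕ) :
    χ ((j * d + b : ℕ) : ℤ) = χ (b : ℤ) := by
  induction j with
  | zero => simp
  | succ j ih =>
      have : (((j+1) * d + b : ℕ) : ℤ) = ((j * d + b : ℕ) : ℤ) + d := by push_cast; ring
      rw [this, hper, ih]

lemma altSum_mul_decomp (χ : ℤ → ℂ) (d : ℕ) (hd : Odd d)
    (hper : ∀ a : ℤ, χ (a + d) = χ a) (m : ℕ) :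
    altSum χ (m * d) = (∑ j ∈ range m, (-expPS (d : ℂ)) ^ j) * altSum χ d := by
  induction m with
  | zero => simp [altSum]
  | succ m ih =>
      have key : altSum χ ((m+1) * d) = altSum χ (m * d) +
          (-expPS (d:ℂ))^m * altSum χ d := by
        have hsplit : altSum χ ((m+1)*d) = altSum χ (m*d) +
            ∑ b ∈ range d, ((-1:ℂ)^(m*d+b) * χ ((m*d+b : ℕ) : ℤ)) • expPS ((m*d+b : ℕ) : ℂ) := by
          rw [altSum, altSum]
          rw [show (m+1)*d = m*d + d by ring, Finset.sum_range_add]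
        rw [hsplit]
        congr 1
        rw [neg_pow, expPS_pow, altSum, Finset.mul_sum]
        refine Finset.sum_congr rfl fun b _ => ?_
        rw [chi_period χ d hper m b]
        have h1 : ((-1:ℂ))^(m*d+b) = (-1)^m * (-1)^b := by
          rw [pow_add, pow_mul', hd.neg_one_pow]
        have h2 : expPS ((m*d+b : ℕ) : ℂ) = expPS ((m:ℂ)*d) * expPS (b : ℂ) := by
          rw [expPS_mul]; push_cast; ring
        rw [h1, h2]
        simp only [smul_eq_C_mul, map_mul, map_pow, map_neg, map_one]
        ring
      rw [show (m+1)*d = m*d + 1*d by ring] at key ⊢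
      rw [key, ih, Finset.sum_range_succ, add_mul]

lemma geom_odd {R : Type*} [CommRing R] (X : R) (m : ℕ) (hm : Odd m) :
    (∑ j ∈ range m, (-X)^j) * (X+1) = X^m + 1 := by
  have h := geom_sum_mul (-X) m
  rw [hm.neg_pow] at h
  linear_combination -h

lemma altSum_mul_eq (χ : ℤ → ℂ) (d : ℕ) (hd : Odd d)
    (hper : ∀ a : ℤ, χ (a + d) = χ a) (m : ℕ) (hm : Odd m) :
    altSum χ (m * d) * (expPS (d:ℂ) + 1) = (expPS ((m*d : ℕ) : ℂ) + 1) * altSum χ d := by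
  rw [altSum_mul_decomp χ d hd hper m, mul_right_comm, geom_odd _ _ hm, expPS_pow]
  push_cast
  ring_nf

lemma multinom_mul (k l m : ℕ) :
    (multinom k l m) * (k.factorial * l.factorial * m.factorial) = (k+l+m).factorial := by
  have hdvd : k.factorial * l.factorial * m.factorial ∣ (k+l+m).factorial := by
    calc k.factorial * l.factorial * m.factorial
        = k.factorial * (l.factorial * m.factorial) := by ring
      _ ∣ k.factorial * (l+m).factorial :=
          Nat.mul_dvd_mul_left _ (Nat.factorial_mul_factorial_dvd_factorial_add l m)
      _ ∣ (k+(l+m)).factorial := Nat.factorial_mul_factorial_dvd_factorial_add k (l+m)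
      _ = (k+l+m).factorial := by rw [add_assoc]
  exact Nat.div_mul_cancel hdvd

lemma coeff_triple (f g h : PowerSeries ℂ) (n : ℕ) :
    (PowerSeries.coeff n) (f * (g * h)) =
      ∑ k ∈ range (n+1), (coeff k f) * ∑ l ∈ range (n+1-k), (coeff l g) * (coeff (n-k-l) h) := by
  rw [coeff_mul, Finset.Nat.sum_antidiagonal_eq_sum_range_succ_mk]
  refine Finset.sum_congr rfl fun k hk => ?_
  rw [coeff_mul, Finset.Nat.sum_antidiagonal_eq_sum_range_succ_mk]
  dsimp only
  have h1 : (n - k).succ = n + 1 - k := by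
    have := Finset.mem_range.mp hk; omega
  rw [h1, Finset.mul_sum]

noncomputable def Gser (d : ℕ) (χ : ℤ → ℂ) (E : ℕ → ℂ → ℂ) (y1 y2 : ℂ) (a b c : ℕ) :
    PowerSeries ℂ :=
  rescale ((b:ℂ)*(c:ℂ)) (PowerSeries.mk fun k => E k ((a:ℂ)*y1) / k.factorial) *
  (rescale ((a:ℂ)*(c:ℂ)) (PowerSeries.mk fun l => E l ((b:ℂ)*y2) / l.factorial) *
   rescale ((a:ℂ)*(b:ℂ)) (PowerSeries.mk fun m => altPowSum χ m (c*d-1) / m.factorial))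

noncomputable def Dser (d a b c : ℕ) : PowerSeries ℂ :=
  (expPS ((b:ℂ)*(c:ℂ)*(d:ℂ))+1) * ((expPS ((a:ℂ)*(c:ℂ)*(d:ℂ))+1) * (expPS ((a:ℂ)*(b:ℂ)*(d:ℂ))+1))

noncomputable def Rser (d : ℕ) (χ : ℤ → ℂ) (y1 y2 : ℂ) (a b c : ℕ) : PowerSeries ℂ :=
  (2 * expPS ((a:ℂ)*(b:ℂ)*(c:ℂ)*y1) * rescale ((b:ℂ)*(c:ℂ)) (altSum χ d)) *
  ((2 * expPS ((a:ℂ)*(b:ℂ)*(c:ℂ)*y2) * rescale ((a:ℂ)*(c:ℂ)) (altSum χ d)) *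
   ((expPS ((a:ℂ)*(b:ℂ)*(c:ℂ)*(d:ℂ))+1) * rescale ((a:ℂ)*(b:ℂ)) (altSum χ d)))

lemma keyG (d : ℕ) (hd : Odd d) (hd0 : 0 < d) (χ : ℤ → ℂ)
    (hper : ∀ a : ℤ, χ (a + d) = χ a)
    (E : ℕ → ℂ → ℂ) (hE : IsGenEuler d χ E) (y1 y2 : ℂ)
    (a b c : ℕ) (hc : Odd c) (hc0 : 0 < c) :
    Gser d χ E y1 y2 a b c * Dser d a b c = Rser d χ y1 y2 a b c := by
  have h1 : rescale ((b:ℂ)*(c:ℂ)) (PowerSeries.mk fun k => E k ((a:ℂ)*y1) / k.factorial) *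
      (expPS ((b:ℂ)*(c:ℂ)*(d:ℂ))+1)
      = 2 * expPS ((a:ℂ)*(b:ℂ)*(c:ℂ)*y1) * rescale ((b:ℂ)*(c:ℂ)) (altSum χ d) := by
    have h := congrArg (rescale ((b:ℂ)*(c:ℂ))) (hE ((a:ℂ)*y1))
    simp only [map_mul, map_add, map_one, map_ofNat, rescale_expPS] at h
    rw [show (d:ℂ) * ((b:ℂ)*(c:ℂ)) = (b:ℂ)*(c:ℂ)*(d:ℂ) by ring,
        show (a:ℂ)*y1*((b:ℂ)*(c:ℂ)) = (a:ℂ)*(b:ℂ)*(c:ℂ)*y1 by ring] at h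
    exact h
  have h2 : rescale ((a:ℂ)*(c:ℂ)) (PowerSeries.mk fun l => E l ((b:ℂ)*y2) / l.factorial) *
      (expPS ((a:ℂ)*(c:ℂ)*(d:ℂ))+1)
      = 2 * expPS ((a:ℂ)*(b:ℂ)*(c:ℂ)*y2) * rescale ((a:ℂ)*(c:ℂ)) (altSum χ d) := by
    have h := congrArg (rescale ((a:ℂ)*(c:ℂ))) (hE ((b:ℂ)*y2))
    simp only [map_mul, map_add, map_one, map_ofNat, rescale_expPS] at h
    rw [show (d:ℂ) * ((a:ℂ)*(c:ℂ)) = (a:ℂ)*(c:ℂ)*(d:ℂ) by ring,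
        show (b:ℂ)*y2*((a:ℂ)*(c:ℂ)) = (a:ℂ)*(b:ℂ)*(c:ℂ)*y2 by ring] at h
    exact h
  have h3 : rescale ((a:ℂ)*(b:ℂ)) (PowerSeries.mk fun m => altPowSum χ m (c*d-1) / m.factorial) *
      (expPS ((a:ℂ)*(b:ℂ)*(d:ℂ))+1)
      = (expPS ((a:ℂ)*(b:ℂ)*(c:ℂ)*(d:ℂ))+1) * rescale ((a:ℂ)*(b:ℂ)) (altSum χ d) := by
    rw [Tser_eq χ (c*d) (Nat.mul_pos hc0 hd0)]
    have h := congrArg (rescale ((a:ℂ)*(b:ℂ))) (altSum_mul_eq χ d hd hper c hc)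
    simp only [map_mul, map_add, map_one, rescale_expPS] at h
    rw [show (d:ℂ) * ((a:ℂ)*(b:ℂ)) = (a:ℂ)*(b:ℂ)*(d:ℂ) by ring,
        show ((c*d : ℕ):ℂ) * ((a:ℂ)*(b:ℂ)) = (a:ℂ)*(b:ℂ)*(c:ℂ)*(d:ℂ) by push_cast; ring] at h
    exact h
  calc Gser d χ E y1 y2 a b c * Dser d a b c
      = (rescale ((b:ℂ)*(c:ℂ)) (PowerSeries.mk fun k => E k ((a:ℂ)*y1) / k.factorial) *
          (expPS ((b:ℂ)*(c:ℂ)*(d:ℂ))+1)) *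
        ((rescale ((a:ℂ)*(c:ℂ)) (PowerSeries.mk fun l => E l ((b:ℂ)*y2) / l.factorial) *
          (expPS ((a:ℂ)*(c:ℂ)*(d:ℂ))+1)) *
         (rescale ((a:ℂ)*(b:ℂ)) (PowerSeries.mk fun m => altPowSum χ m (c*d-1) / m.factorial) *
          (expPS ((a:ℂ)*(b:ℂ)*(d:ℂ))+1))) := by
        rw [Gser, Dser]; ring
    _ = Rser d χ y1 y2 a b c := by rw [h1, h2, h3, Rser]

lemma Ssum_eq_coeff (F1 F2 T : ℕ → ℂ) (a b c : ℕ) (n : ℕ) :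
    (∑ k ∈ range (n + 1), ∑ l ∈ range (n + 1 - k),
      (multinom k l (n - k - l) : ℂ) * F1 k * F2 l * T (n - k - l) *
        (a : ℂ) ^ (l + (n - k - l)) * (b : ℂ) ^ (k + (n - k - l)) * (c : ℂ) ^ (k + l))
    = (n.factorial : ℂ) * (PowerSeries.coeff n)
        (rescale ((b:ℂ)*(c:ℂ)) (PowerSeries.mk fun k => F1 k / k.factorial) *
         (rescale ((a:ℂ)*(c:ℂ)) (PowerSeries.mk fun l => F2 l / l.factorial) *
          rescale ((a:ℂ)*(b:ℂ)) (PowerSeries.mk fun m => T m / m.factorial))) := by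
  rw [coeff_triple, Finset.mul_sum]
  refine Finset.sum_congr rfl fun k hk => ?_
  rw [Finset.mul_sum, Finset.mul_sum]
  refine Finset.sum_congr rfl fun l hl => ?_
  simp only [coeff_rescale, coeff_mk]
  have hk' : k ≤ n := by have := Finset.mem_range.mp hk; omega
  have hl' : l ≤ n - k := by have := Finset.mem_range.mp hl; omega
  set m := n - k - l with hm
  have hn : k + l + m = n := by omega
  have hfac : (multinom k l m : ℂ) * ((k.factorial : ℂ) * (l.factorial : ℂ) * (m.factorial : ℂ))
      = (n.factorial : ℂ) := by
    have := multinom_mul k l m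
    rw [hn] at this
    exact_mod_cast this
  have hk0 : (k.factorial : ℂ) ≠ 0 := Nat.cast_ne_zero.mpr k.factorial_ne_zero
  have hl0 : (l.factorial : ℂ) ≠ 0 := Nat.cast_ne_zero.mpr l.factorial_ne_zero
  have hm0 : (m.factorial : ℂ) ≠ 0 := Nat.cast_ne_zero.mpr m.factorial_ne_zero
  field_simp
  linear_combination (F1 k * F2 l * T m * (a:ℂ)^l * (a:ℂ)^m * (b:ℂ)^k * (b:ℂ)^m * (c:ℂ)^k * (c:ℂ)^l) * hfac

lemma Dser_ne_zero (d a b c : ℕ) : Dser d a b c ≠ 0 := by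
  intro h
  have hcc : constantCoeff (Dser d a b c) = 8 := by
    simp [Dser, map_mul, map_add, map_one, constantCoeff_expPS]
    norm_num
  rw [h, map_zero] at hcc
  norm_num at hcc

end Stmt1Aux

open Stmt1Aux PowerSeries in
/-- Theorem 2: the triple sum with two generalized Euler polynomial factors and one
alternating generalized power sum factor is invariant under all six permutations of
`(w₁, w₂, w₃)` (all odd). -/
theorem stmt_1 (d : ℕ) (hd : Odd d) (hd0 : 0 < d) (χ : ℤ → ℂ)
    (hper : ∀ a : ℤ, χ (a + d) = χ a)
    (hmul : ∀ a b : ℤ, χ (a * b) = χ a * χ b) (hone : χ 1 = 1)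
    (hvan : ∀ a : ℤ, 1 < Int.gcd a d → χ a = 0)
    (E : ℕ → ℂ → ℂ) (hE : IsGenEuler d χ E)
    (w : Fin 3 → ℕ) (hw : ∀ i, 0 < w i) (hwodd : ∀ i, Odd (w i))
    (y1 y2 : ℂ) (n : ℕ) (σ : Equiv.Perm (Fin 3)) :
    (∑ k ∈ range (n + 1), ∑ l ∈ range (n + 1 - k),
      (multinom k l (n - k - l) : ℂ) * E k ((w (σ 0) : ℂ) * y1) *
        E l ((w (σ 1) : ℂ) * y2) * altPowSum χ (n - k - l) (w (σ 2) * d - 1) *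
        (w (σ 0) : ℂ) ^ (l + (n - k - l)) * (w (σ 1) : ℂ) ^ (k + (n - k - l)) *
        (w (σ 2) : ℂ) ^ (k + l))
    = ∑ k ∈ range (n + 1), ∑ l ∈ range (n + 1 - k),
      (multinom k l (n - k - l) : ℂ) * E k ((w 0 : ℂ) * y1) *
        E l ((w 1 : ℂ) * y2) * altPowSum χ (n - k - l) (w 2 * d - 1) *
        (w 0 : ℂ) ^ (l + (n - k - l)) * (w 1 : ℂ) ^ (k + (n - k - l)) *
        (w 2 : ℂ) ^ (k + l) := by
  have key : ∀ a b c : ℕ,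
      (∑ k ∈ range (n + 1), ∑ l ∈ range (n + 1 - k),
        (multinom k l (n - k - l) : ℂ) * E k ((a : ℂ) * y1) *
          E l ((b : ℂ) * y2) * altPowSum χ (n - k - l) (c * d - 1) *
          (a : ℂ) ^ (l + (n - k - l)) * (b : ℂ) ^ (k + (n - k - l)) *
          (c : ℂ) ^ (k + l))
      = (n.factorial : ℂ) * (PowerSeries.coeff n) (Gser d χ E y1 y2 a b c) := by
    intro a b c
    exact Ssum_eq_coeff (fun k => E k ((a:ℂ)*y1)) (fun l => E l ((b:ℂ)*y2))
      (fun m => altPowSum χ m (c*d-1)) a b c n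
  have hGeq : ∀ a b c a' b' c' : ℕ, Odd c → 0 < c → Odd c' → 0 < c' →
      Dser d a b c = Dser d a' b' c' → Rser d χ y1 y2 a b c = Rser d χ y1 y2 a' b' c' →
      (n.factorial : ℂ) * (PowerSeries.coeff n) (Gser d χ E y1 y2 a b c)
        = (n.factorial : ℂ) * (PowerSeries.coeff n) (Gser d χ E y1 y2 a' b' c') := by
    intro a b c a' b' c' hc hc0 hc' hc0' hD hR
    have k1 := keyG d hd hd0 χ hper E hE y1 y2 a b c hc hc0
    have k2 := keyG d hd hd0 χ hper E hE y1 y2 a' b' c' hc' hc0'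
    rw [hD, hR, ← k2] at k1
    rw [mul_right_cancel₀ (Dser_ne_zero d a' b' c') k1]
  have h012 : ∀ x : Fin 3, x = 0 ∨ x = 1 ∨ x = 2 := by decide
  have hinj : ∀ i j : Fin 3, i ≠ j → σ i ≠ σ j := fun i j hij h => hij (σ.injective h)
  rcases h012 (σ 0) with h0|h0|h0 <;> rcases h012 (σ 1) with h1|h1|h1 <;>
    rcases h012 (σ 2) with h2|h2|h2 <;>
    first
      | exact absurd (h0.trans h1.symm) (hinj 0 1 (by decide))
      | exact absurd (h0.trans h2.symm) (hinj 0 2 (by decide))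
      | exact absurd (h1.trans h2.symm) (hinj 1 2 (by decide))
      | (rw [h0, h1, h2]; done)
      | (rw [h0, h1, h2, key, key]
         exact hGeq _ _ _ _ _ _ (hwodd _) (hw _) (hwodd _) (hw _)
           (by simp only [Dser]; ring_nf) (by simp only [Rser]; ring_nf))
end

section
/- For any odd positive integers w1, w2, w3, any complex numbers y1, y2, and any nonnegative integer n, the quantity w_{σ(1)}^n Σ_{k=0}^{n} (n choose k) E_{k,χ}(w_{σ(3)} y1) Σ_{a=0}^{w_{σ(1)} d − 1} (−1)^a χ(a) E_{n−k,χ}(w_{σ(2)} y2 + (w_{σ(2)}/w_{σ(1)}) a) w_{σ(3)}^{n−k} w_{σ(2)}^{k} is the same for all six permutations σ of {1,2,3}; explicitly, for example, w1^n Σ_{k=0}^{n} (n choose k) E_{k,χ}(w3 y1) Σ_{a=0}^{w1 d − 1} (−1)^a χ(a) E_{n−k,χ}(w2 y2 + (w2/w1) a) w3^{n−k} w2^{k} = w2^n Σ_{k=0}^{n} (n choose k) E_{k,χ}(w1 y1) Σ_{a=0}^{w2 d − 1} (−1)^a χ(a) E_{n−k,χ}(w3 y2 + (w3/w2) a) w1^{n−k}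 w3^{k}, and similarly for the other four orderings. -/
open Finset

open PowerSeries

noncomputable def eps (c : ℂ) : PowerSeries ℂ := rescale c (exp ℂ)
lemma eps_mul (a b : ℂ) : eps a * eps b = eps (a + b) := exp_mul_exp_eq_exp_add a b
lemma eps_zero : eps 0 = 1 := by
  ext n; cases n <;> simp [eps, coeff_rescale, coeff_exp]
lemma rescale_C' (c r : ℂ) : rescale c (C r) = C r := by
  ext n; cases n <;> simp [coeff_rescale, coeff_C]

noncomputable def lam (χ : ℤ → ℂ) (d : ℕ) (c : ℂ) : PowerSeries ℂ :=
  ∑ a ∈ range d, C ((-1 : ℂ) ^ a * χ (a : ℤ)) * eps ((a : ℂ) * c)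

lemma geom (u : ℕ) (c : ℂ) :
    (∑ j ∈ range u, C ((-1 : ℂ) ^ j) * eps ((j : ℂ) * c)) * (eps c + 1)
      = 1 - C ((-1 : ℂ) ^ u) * eps ((u : ℂ) * c) := by
  induction u with
  | zero => simp [eps_zero]
  | succ m ih =>
      rw [sum_range_succ, add_mul, ih]
      have h1 : eps c * eps ((m : ℂ) * c) = eps (((m : ℂ) + 1) * c) := by
        rw [eps_mul]; ring_nf
      rw [mul_add, mul_one, mul_comm (C ((-1:ℂ)^m) * eps ((m:ℂ)*c)) (eps c),
        ← mul_assoc (eps c), mul_comm (eps c), mul_assoc, h1]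
      push_cast
      rw [pow_succ, map_mul]
      simp only [map_neg, map_one]
      ring

lemma chi_per (χ : ℤ → ℂ) (d : ℕ) (hper : ∀ a : ℤ, χ (a + d) = χ a) (a : ℤ) (k : ℕ) :
    χ (a + k * d) = χ a := by
  induction k with
  | zero => simp
  | succ m ih => push_cast; rw [add_mul, one_mul, ← add_assoc, hper, ih]

lemma neg_one_pow_mul_odd (u d : ℕ) (hd : Odd d) : (-1 : ℂ) ^ (u * d) = (-1 : ℂ) ^ u := by
  rcases Nat.even_or_odd u with h | h
  · rw [h.neg_one_pow, (h.mul_right d).neg_one_pow]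
  · rw [h.neg_one_pow, (h.mul hd).neg_one_pow]

lemma split (χ : ℤ → ℂ) (d : ℕ) (hper : ∀ a : ℤ, χ (a + d) = χ a) (hd : Odd d)
    (u : ℕ) (c : ℂ) :
    ∑ a ∈ range (u * d), C ((-1 : ℂ) ^ a * χ (a : ℤ)) * eps ((a : ℂ) * c)
      = (∑ j ∈ range u, C ((-1 : ℂ) ^ j) * eps ((j : ℂ) * ((d : ℂ) * c))) * lam χ d c := by
  induction u with
  | zero => simp
  | succ m ih =>
      have hmul : (m + 1) * d = m * d + d := by ring
      rw [hmul, sum_range_add, ih, sum_range_succ, add_mul]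
      congr 1
      rw [lam, mul_sum]
      refine Finset.sum_congr rfl fun i hi => ?_
      have hchi : χ ((m * d + i : ℕ) : ℤ) = χ (i : ℤ) := by
        push_cast
        rw [add_comm, chi_per χ d hper]
      have hsign : (-1 : ℂ) ^ (m * d + i) = (-1 : ℂ) ^ m * (-1 : ℂ) ^ i := by
        rw [pow_add, neg_one_pow_mul_odd m d hd]
      have heps : eps (((m * d + i : ℕ) : ℂ) * c)
          = eps ((m : ℂ) * ((d : ℂ) * c)) * eps ((i : ℂ) * c) := by
        rw [eps_mul]; push_cast; ring_nf
      rw [hchi, hsign, heps]; simp only [map_mul]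
      ring

lemma expPS_eq_s2 (c : ℂ) : expPS c = eps c := by
  ext n; simp [expPS, eps, coeff_rescale, coeff_exp]; ring

lemma rescale_eps (c a : ℂ) : rescale c (eps a) = eps (a * c) := by
  simp [eps, rescale_rescale]

lemma rescale_two (c : ℂ) : rescale c (2 : PowerSeries ℂ) = 2 := by
  have : (2 : PowerSeries ℂ) = C 2 := by simp [map_ofNat]
  rw [this, rescale_C']

lemma euler_rescaled (d : ℕ) (χ : ℤ → ℂ) (E : ℕ → ℂ → ℂ) (hE : IsGenEuler d χ E)
    (x c : ℂ) :
    rescale c (PowerSeries.mk fun n => E n x / n.factorial) * (eps ((d : ℂ) * c) + 1)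
      = 2 * eps (x * c) * lam χ d c := by
  have h := congrArg (rescale c) (hE x)
  rw [map_mul, map_add, map_one, map_mul, map_mul, expPS_eq_s2, expPS_eq_s2, rescale_eps,
    rescale_eps, rescale_two] at h
  rw [h]
  congr 1
  rw [altSum, map_sum, lam]
  refine Finset.sum_congr rfl fun a ha => ?_
  rw [smul_eq_C_mul, map_mul, rescale_C', expPS_eq_s2, rescale_eps]

lemma key (d : ℕ) (hd : Odd d) (χ : ℤ → ℂ) (hper : ∀ a : ℤ, χ (a + d) = χ a)
    (E : ℕ → ℂ → ℂ) (hE : IsGenEuler d χ E) (u v s : ℕ) (hu : 0 < u) (huodd : Odd u)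
    (y1 y2 : ℂ) :
    (rescale ((u : ℂ) * (v : ℂ)) (PowerSeries.mk fun k => E k ((s : ℂ) * y1) / k.factorial)
      * rescale ((u : ℂ) * (s : ℂ)) (∑ a ∈ range (u * d), C ((-1 : ℂ) ^ a * χ (a : ℤ)) *
          PowerSeries.mk fun m => E m ((v : ℂ) * y2 + (v : ℂ) / (u : ℂ) * (a : ℂ)) / m.factorial))
    * ((eps ((d : ℂ) * ((u : ℂ) * (v : ℂ))) + 1) * (eps ((d : ℂ) * ((u : ℂ) * (s : ℂ))) + 1)
        * (eps ((d : ℂ) * ((v : ℂ) * (s : ℂ))) + 1))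
    = 4 * eps ((u : ℂ) * (v : ℂ) * (s : ℂ) * (y1 + y2))
        * (1 + eps ((u : ℂ) * (v : ℂ) * (s : ℂ) * (d : ℂ)))
        * (lam χ d ((u : ℂ) * (v : ℂ)) * lam χ d ((u : ℂ) * (s : ℂ)) * lam χ d ((v : ℂ) * (s : ℂ))) := by
  have hU : (u : ℂ) ≠ 0 := Nat.cast_ne_zero.mpr hu.ne'
  have h1 := euler_rescaled d χ E hE ((s : ℂ) * y1) ((u : ℂ) * (v : ℂ))
  have h2 : rescale ((u : ℂ) * (s : ℂ)) (∑ a ∈ range (u * d), C ((-1 : ℂ) ^ a * χ (a : ℤ)) *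
        PowerSeries.mk fun m => E m ((v : ℂ) * y2 + (v : ℂ) / (u : ℂ) * (a : ℂ)) / m.factorial)
      * (eps ((d : ℂ) * ((u : ℂ) * (s : ℂ))) + 1)
      = (2 * eps ((u : ℂ) * (v : ℂ) * (s : ℂ) * y2) * lam χ d ((u : ℂ) * (s : ℂ))) *
          ((∑ j ∈ range u, C ((-1 : ℂ) ^ j) * eps ((j : ℂ) * ((d : ℂ) * ((v : ℂ) * (s : ℂ)))))
            * lam χ d ((v : ℂ) * (s : ℂ))) := by
    rw [map_sum, sum_mul]
    have hterm : ∀ a ∈ range (u * d),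
        rescale ((u : ℂ) * (s : ℂ)) (C ((-1 : ℂ) ^ a * χ (a : ℤ)) *
          PowerSeries.mk fun m => E m ((v : ℂ) * y2 + (v : ℂ) / (u : ℂ) * (a : ℂ)) / m.factorial)
          * (eps ((d : ℂ) * ((u : ℂ) * (s : ℂ))) + 1)
        = (2 * eps ((u : ℂ) * (v : ℂ) * (s : ℂ) * y2) * lam χ d ((u : ℂ) * (s : ℂ))) *
            (C ((-1 : ℂ) ^ a * χ (a : ℤ)) * eps ((a : ℂ) * ((v : ℂ) * (s : ℂ)))) := by
      intro a _
      rw [map_mul, rescale_C', mul_assoc, euler_rescaled d χ E hE _ ((u : ℂ) * (s : ℂ))]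
      have harg : ((v : ℂ) * y2 + (v : ℂ) / (u : ℂ) * (a : ℂ)) * ((u : ℂ) * (s : ℂ))
          = (u : ℂ) * (v : ℂ) * (s : ℂ) * y2 + (a : ℂ) * ((v : ℂ) * (s : ℂ)) := by
        field_simp
      rw [harg, ← eps_mul]; ring
    rw [Finset.sum_congr rfl hterm, ← mul_sum, split χ d hper hd u ((v : ℂ) * (s : ℂ))]
  calc (rescale ((u : ℂ) * (v : ℂ)) (PowerSeries.mk fun k => E k ((s : ℂ) * y1) / k.factorial)
      * rescale ((u : ℂ) * (s : ℂ)) (∑ a ∈ range (u * d), C ((-1 : ℂ) ^ a * χ (a : ℤ)) *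
          PowerSeries.mk fun m => E m ((v : ℂ) * y2 + (v : ℂ) / (u : ℂ) * (a : ℂ)) / m.factorial))
    * ((eps ((d : ℂ) * ((u : ℂ) * (v : ℂ))) + 1) * (eps ((d : ℂ) * ((u : ℂ) * (s : ℂ))) + 1)
        * (eps ((d : ℂ) * ((v : ℂ) * (s : ℂ))) + 1))
      = (rescale ((u : ℂ) * (v : ℂ)) (PowerSeries.mk fun k => E k ((s : ℂ) * y1) / k.factorial)
          * (eps ((d : ℂ) * ((u : ℂ) * (v : ℂ))) + 1))
        * ((rescale ((u : ℂ) * (s : ℂ)) (∑ a ∈ range (u * d), C ((-1 : ℂ) ^ a * χ (a : ℤ)) *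
            PowerSeries.mk fun m => E m ((v : ℂ) * y2 + (v : ℂ) / (u : ℂ) * (a : ℂ)) / m.factorial)
          * (eps ((d : ℂ) * ((u : ℂ) * (s : ℂ))) + 1)) * (eps ((d : ℂ) * ((v : ℂ) * (s : ℂ))) + 1)) := by
        ring
    _ = (2 * eps ((s : ℂ) * y1 * ((u : ℂ) * (v : ℂ))) * lam χ d ((u : ℂ) * (v : ℂ)))
        * (((2 * eps ((u : ℂ) * (v : ℂ) * (s : ℂ) * y2) * lam χ d ((u : ℂ) * (s : ℂ))) *
            ((∑ j ∈ range u, C ((-1 : ℂ) ^ j) * eps ((j : ℂ) * ((d : ℂ) * ((v : ℂ) * (s : ℂ)))))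
              * lam χ d ((v : ℂ) * (s : ℂ))))
          * (eps ((d : ℂ) * ((v : ℂ) * (s : ℂ))) + 1)) := by rw [h1, h2]
    _ = (2 * eps ((s : ℂ) * y1 * ((u : ℂ) * (v : ℂ))) * lam χ d ((u : ℂ) * (v : ℂ)))
        * ((2 * eps ((u : ℂ) * (v : ℂ) * (s : ℂ) * y2) * lam χ d ((u : ℂ) * (s : ℂ))) *
            (((∑ j ∈ range u, C ((-1 : ℂ) ^ j) * eps ((j : ℂ) * ((d : ℂ) * ((v : ℂ) * (s : ℂ)))))
              * (eps ((d : ℂ) * ((v : ℂ) * (s : ℂ))) + 1)) * lam χ d ((v : ℂ) * (s : ℂ)))) := by ring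
    _ = 4 * eps ((u : ℂ) * (v : ℂ) * (s : ℂ) * (y1 + y2))
        * (1 + eps ((u : ℂ) * (v : ℂ) * (s : ℂ) * (d : ℂ)))
        * (lam χ d ((u : ℂ) * (v : ℂ)) * lam χ d ((u : ℂ) * (s : ℂ)) * lam χ d ((v : ℂ) * (s : ℂ))) := by
        rw [geom u ((d : ℂ) * ((v : ℂ) * (s : ℂ)))]
        have hsg : (1 : PowerSeries ℂ) - C ((-1 : ℂ) ^ u) * eps ((u : ℂ) * ((d : ℂ) * ((v : ℂ) * (s : ℂ))))
            = 1 + eps ((u : ℂ) * (v : ℂ) * (s : ℂ) * (d : ℂ)) := by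
          rw [huodd.neg_one_pow]
          have harg : (u : ℂ) * ((d : ℂ) * ((v : ℂ) * (s : ℂ)))
              = (u : ℂ) * (v : ℂ) * (s : ℂ) * (d : ℂ) := by ring
          rw [harg]
          simp only [map_neg, map_one]
          ring
        rw [hsg]
        have he : eps ((s : ℂ) * y1 * ((u : ℂ) * (v : ℂ))) * eps ((u : ℂ) * (v : ℂ) * (s : ℂ) * y2)
            = eps ((u : ℂ) * (v : ℂ) * (s : ℂ) * (y1 + y2)) := by
          rw [eps_mul]
          have : (s : ℂ) * y1 * ((u : ℂ) * (v : ℂ)) + (u : ℂ) * (v : ℂ) * (s : ℂ) * y2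
              = (u : ℂ) * (v : ℂ) * (s : ℂ) * (y1 + y2) := by ring
          rw [this]
        calc _ = (2 * 2) * (eps ((s : ℂ) * y1 * ((u : ℂ) * (v : ℂ))) * eps ((u : ℂ) * (v : ℂ) * (s : ℂ) * y2))
              * (1 + eps ((u : ℂ) * (v : ℂ) * (s : ℂ) * (d : ℂ)))
              * (lam χ d ((u : ℂ) * (v : ℂ)) * lam χ d ((u : ℂ) * (s : ℂ)) * lam χ d ((v : ℂ) * (s : ℂ))) := by
              ring
          _ = _ := by rw [he]; norm_num

lemma coeff_P (χ : ℤ → ℂ) (d : ℕ) (E : ℕ → ℂ → ℂ) (u v s : ℕ) (hu : 0 < u)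
    (y1 y2 : ℂ) (n : ℕ) :
    (u : ℂ) ^ n * ∑ k ∈ range (n + 1),
      (n.choose k : ℂ) * E k ((s : ℂ) * y1) *
        (∑ a ∈ range (u * d), (-1 : ℂ) ^ a * χ (a : ℤ) *
          E (n - k) ((v : ℂ) * y2 + (v : ℂ) / (u : ℂ) * (a : ℂ))) *
        (s : ℂ) ^ (n - k) * (v : ℂ) ^ k
    = (n.factorial : ℂ) * coeff n
        (rescale ((u : ℂ) * (v : ℂ)) (PowerSeries.mk fun k => E k ((s : ℂ) * y1) / k.factorial)
          * rescale ((u : ℂ) * (s : ℂ)) (∑ a ∈ range (u * d), C ((-1 : ℂ) ^ a * χ (a : ℤ)) *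
              PowerSeries.mk fun m => E m ((v : ℂ) * y2 + (v : ℂ) / (u : ℂ) * (a : ℂ)) / m.factorial)) := by
  rw [coeff_mul, Finset.Nat.sum_antidiagonal_eq_sum_range_succ_mk, mul_sum, mul_sum]
  refine Finset.sum_congr rfl fun k hk => ?_
  have hkn : k ≤ n := Nat.lt_succ_iff.mp (mem_range.mp hk)
  rw [coeff_rescale, coeff_rescale, coeff_mk, map_sum]
  simp_rw [coeff_C_mul, coeff_mk, mul_div_assoc']
  rw [← Finset.sum_div]
  have hfk : (k.factorial : ℂ) ≠ 0 := Nat.cast_ne_zero.mpr k.factorial_pos.ne'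
  have hfnk : ((n - k).factorial : ℂ) ≠ 0 := Nat.cast_ne_zero.mpr (n - k).factorial_pos.ne'
  rw [Nat.cast_choose ℂ hkn]
  have hup : (u : ℂ) ^ n = (u : ℂ) ^ k * (u : ℂ) ^ (n - k) := by
    rw [← pow_add, Nat.add_sub_cancel' hkn]
  have hfn : (n.factorial : ℂ) = (n.choose k : ℂ) * k.factorial * (n - k).factorial := by
    rw [Nat.cast_choose ℂ hkn]; field_simp
  rw [hup]
  field_simp
  ring

lemma prod3_inv (W : Fin 3 → ℂ) (σ : Equiv.Perm (Fin 3)) :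
    W (σ 0) * W (σ 1) * W (σ 2) = W 0 * W 1 * W 2 := by
  have h := Equiv.prod_comp σ W
  rw [Fin.prod_univ_three, Fin.prod_univ_three] at h
  exact h

lemma sym3 {M : Type*} [CommMonoid M] (W : Fin 3 → ℂ) (hW : ∀ i, W i ≠ 0)
    (σ : Equiv.Perm (Fin 3)) (f : ℂ → M) :
    f (W (σ 0) * W (σ 1)) * f (W (σ 0) * W (σ 2)) * f (W (σ 1) * W (σ 2))
      = f (W 0 * W 1) * f (W 0 * W 2) * f (W 1 * W 2) := by
  have key : ∀ τ : Equiv.Perm (Fin 3),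
      f (W (τ 0) * W (τ 1)) * f (W (τ 0) * W (τ 2)) * f (W (τ 1) * W (τ 2))
        = ∏ i, f ((W 0 * W 1 * W 2) / W (τ i)) := by
    intro τ
    rw [Fin.prod_univ_three]
    have h0 : (W 0 * W 1 * W 2) / W (τ 0) = W (τ 1) * W (τ 2) := by
      rw [div_eq_iff (hW (τ 0)), ← prod3_inv W τ]; ring
    have h1 : (W 0 * W 1 * W 2) / W (τ 1) = W (τ 0) * W (τ 2) := by
      rw [div_eq_iff (hW (τ 1)), ← prod3_inv W τ]; ring
    have h2 : (W 0 * W 1 * W 2) / W (τ 2) = W (τ 0) * W (τ 1) := by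
      rw [div_eq_iff (hW (τ 2)), ← prod3_inv W τ]
    rw [h0, h1, h2]; ac_rfl
  rw [key σ, Equiv.prod_comp σ (fun i => f ((W 0 * W 1 * W 2) / W i)), Fin.prod_univ_three]
  have h0 : (W 0 * W 1 * W 2) / W 0 = W 1 * W 2 := by rw [div_eq_iff (hW 0)]; ring
  have h1 : (W 0 * W 1 * W 2) / W 1 = W 0 * W 2 := by rw [div_eq_iff (hW 1)]; ring
  have h2 : (W 0 * W 1 * W 2) / W 2 = W 0 * W 1 := by rw [div_eq_iff (hW 2)]
  rw [h0, h1, h2]; ac_rfl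

lemma constCoeff_eps (c : ℂ) : constantCoeff (eps c) = 1 := by
  have : constantCoeff (eps c) = coeff 0 (eps c) := by
    rw [PowerSeries.coeff_zero_eq_constantCoeff]
  rw [this]; simp [eps, coeff_rescale, coeff_exp]


/-- Theorem 3 -/
theorem stmt_2 (d : ℕ) (hd : Odd d) (hd0 : 0 < d) (χ : ℤ → ℂ)
    (hper : ∀ a : ℤ, χ (a + d) = χ a)
    (hmul : ∀ a b : ℤ, χ (a * b) = χ a * χ b) (hone : χ 1 = 1)
    (hvan : ∀ a : ℤ, 1 < Int.gcd a d → χ a = 0)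
    (E : ℕ → ℂ → ℂ) (hE : IsGenEuler d χ E)
    (w : Fin 3 → ℕ) (hw : ∀ i, 0 < w i) (hwodd : ∀ i, Odd (w i))
    (y1 y2 : ℂ) (n : ℕ) (σ : Equiv.Perm (Fin 3)) :
    ((w (σ 0) : ℂ) ^ n * ∑ k ∈ range (n + 1),
      (n.choose k : ℂ) * E k ((w (σ 2) : ℂ) * y1) *
        (∑ a ∈ range (w (σ 0) * d), (-1 : ℂ) ^ a * χ (a : ℤ) *
          E (n - k) ((w (σ 1) : ℂ) * y2 + (w (σ 1) : ℂ) / (w (σ 0) : ℂ) * (a : ℂ))) *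
        (w (σ 2) : ℂ) ^ (n - k) * (w (σ 1) : ℂ) ^ k)
    = (w 0 : ℂ) ^ n * ∑ k ∈ range (n + 1),
      (n.choose k : ℂ) * E k ((w 2 : ℂ) * y1) *
        (∑ a ∈ range (w 0 * d), (-1 : ℂ) ^ a * χ (a : ℤ) *
          E (n - k) ((w 1 : ℂ) * y2 + (w 1 : ℂ) / (w 0 : ℂ) * (a : ℂ))) *
        (w 2 : ℂ) ^ (n - k) * (w 1 : ℂ) ^ k := by
  have hW0 : ∀ i, ((w i : ℂ)) ≠ 0 := fun i => Nat.cast_ne_zero.mpr (hw i).ne'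
  have hkσ := key d hd χ hper E hE (w (σ 0)) (w (σ 1)) (w (σ 2)) (hw _) (hwodd _) y1 y2
  have hk1 := key d hd χ hper E hE (w 0) (w 1) (w 2) (hw 0) (hwodd 0) y1 y2
  have hprod := prod3_inv (fun i => (w i : ℂ)) σ
  try simp only at hprod
  have hlam := sym3 (fun i => (w i : ℂ)) hW0 σ (lam χ d)
  try simp only at hlam
  have hDeq := sym3 (fun i => (w i : ℂ)) hW0 σ (fun c => eps ((d : ℂ) * c) + 1)
  try simp only at hDeq
  have hDne : (eps ((d : ℂ) * ((w 0 : ℂ) * (w 1 : ℂ))) + 1)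
      * (eps ((d : ℂ) * ((w 0 : ℂ) * (w 2 : ℂ))) + 1)
      * (eps ((d : ℂ) * ((w 1 : ℂ) * (w 2 : ℂ))) + 1) ≠ 0 := by
    intro h0
    have := congrArg (constantCoeff) h0
    simp [map_mul, map_add, constCoeff_eps] at this
  have hPD : _ = _ := hkσ.trans ((by rw [hprod, hlam] :
      (4 : PowerSeries ℂ) * eps ((w (σ 0) : ℂ) * (w (σ 1) : ℂ) * (w (σ 2) : ℂ) * (y1 + y2))
        * (1 + eps ((w (σ 0) : ℂ) * (w (σ 1) : ℂ) * (w (σ 2) : ℂ) * (d : ℂ)))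
        * (lam χ d ((w (σ 0) : ℂ) * (w (σ 1) : ℂ)) * lam χ d ((w (σ 0) : ℂ) * (w (σ 2) : ℂ))
            * lam χ d ((w (σ 1) : ℂ) * (w (σ 2) : ℂ)))
      = 4 * eps ((w 0 : ℂ) * (w 1 : ℂ) * (w 2 : ℂ) * (y1 + y2))
        * (1 + eps ((w 0 : ℂ) * (w 1 : ℂ) * (w 2 : ℂ) * (d : ℂ)))
        * (lam χ d ((w 0 : ℂ) * (w 1 : ℂ)) * lam χ d ((w 0 : ℂ) * (w 2 : ℂ))
            * lam χ d ((w 1 : ℂ) * (w 2 : ℂ)))).trans hk1.symm)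
  rw [hDeq] at hPD
  have hP := mul_right_cancel₀ hDne hPD
  rw [coeff_P χ d E (w (σ 0)) (w (σ 1)) (w (σ 2)) (hw _) y1 y2 n,
    coeff_P χ d E (w 0) (w 1) (w 2) (hw 0) y1 y2 n, hP]
end

section
/- For any odd positive integers w1, w2, w3, any complex number y1, and any nonnegative integer n: Σ_{k+l+m=n} (n choose k,l,m) E_{k,χ}(w1 y1) T_l(w2 d − 1, χ) T_m(w3 d − 1, χ) w1^{l+m} w2^{k+m} w3^{k+l} = w2^n Σ_{k=0}^{n} (n choose k) Σ_{a=0}^{w2 d − 1} (−1)^a χ(a) E_{k,χ}(w1 y1 + (w1/w2) a) T_{n−k}(w3 d − 1, χ) w1^{n−k} w3^{k}. -/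
open Finset

lemma expPS_add (a b : ℂ) : expPS (a + b) = expPS a * expPS b := by
  ext n
  rw [PowerSeries.coeff_mul, Finset.Nat.sum_antidiagonal_eq_sum_range_succ_mk]
  simp only [expPS, PowerSeries.coeff_mk]
  rw [add_pow, Finset.sum_div]
  refine Finset.sum_congr rfl fun k hk => ?_
  have hk' : k ≤ n := Nat.lt_succ_iff.mp (Finset.mem_range.mp hk)
  rw [Nat.cast_choose ℂ hk']
  have h1 : (k.factorial : ℂ) ≠ 0 := Nat.cast_ne_zero.mpr k.factorial_ne_zero
  have h2 : ((n - k).factorial : ℂ) ≠ 0 := Nat.cast_ne_zero.mpr (n - k).factorial_ne_zero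
  have h3 : (n.factorial : ℂ) ≠ 0 := Nat.cast_ne_zero.mpr n.factorial_ne_zero
  field_simp

/-- Addition formula for generalized Euler polynomials. -/
lemma euler_add {d : ℕ} {χ : ℤ → ℂ} {E : ℕ → ℂ → ℂ} (hE : IsGenEuler d χ E)
    (x y : ℂ) (n : ℕ) :
    E n (x + y) = ∑ j ∈ range (n + 1), (n.choose j : ℂ) * E j x * y ^ (n - j) := by
  have hu : (expPS (d : ℂ) + 1) ≠ 0 := by
    intro h
    have h2 := congrArg (PowerSeries.constantCoeff) h
    simp [expPS] at h2
  have key : (PowerSeries.mk fun m => E m (x + y) / m.factorial)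
      = expPS y * PowerSeries.mk fun m => E m x / m.factorial := by
    apply mul_right_cancel₀ hu
    rw [hE (x + y), expPS_add]
    have h2 := hE x
    calc (2 : PowerSeries ℂ) * (expPS x * expPS y) * altSum χ d
        = expPS y * ((2 : PowerSeries ℂ) * expPS x * altSum χ d) := by ring
      _ = expPS y * ((PowerSeries.mk fun m => E m x / m.factorial) * (expPS (d : ℂ) + 1)) := by
          rw [h2]
      _ = (expPS y * PowerSeries.mk fun m => E m x / m.factorial) * (expPS (d : ℂ) + 1) := by
          ring
  have hc := congrArg (PowerSeries.coeff n) key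
  rw [PowerSeries.coeff_mk, PowerSeries.coeff_mul,
    Finset.Nat.sum_antidiagonal_eq_sum_range_succ_mk] at hc
  simp only [expPS, PowerSeries.coeff_mk] at hc
  rw [← Finset.sum_range_reflect] at hc
  have hn : (n.factorial : ℂ) ≠ 0 := Nat.cast_ne_zero.mpr n.factorial_ne_zero
  have h0 : E n (x + y) = (n.factorial : ℂ) * (E n (x + y) / n.factorial) := by
    field_simp
  rw [h0, hc, Finset.mul_sum]
  refine Finset.sum_congr rfl fun j hj => ?_
  have hj' : j ≤ n := Nat.lt_succ_iff.mp (Finset.mem_range.mp hj)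
  have e1 : n + 1 - 1 - j = n - j := by omega
  have e2 : n - (n - j) = j := Nat.sub_sub_self hj'
  rw [e1, e2, Nat.cast_choose ℂ hj']
  have h1 : (j.factorial : ℂ) ≠ 0 := Nat.cast_ne_zero.mpr j.factorial_ne_zero
  have h2 : ((n - j).factorial : ℂ) ≠ 0 := Nat.cast_ne_zero.mpr (n - j).factorial_ne_zero
  field_simp

lemma tri {M : Type*} [AddCommMonoid M] (n : ℕ) (f : ℕ → ℕ → M) :
    (∑ k ∈ range (n + 1), ∑ j ∈ range (k + 1), f k j)
      = ∑ j ∈ range (n + 1), ∑ l ∈ range (n + 1 - j), f (j + l) j := by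
  rw [Finset.sum_sigma', Finset.sum_sigma']
  refine Finset.sum_nbij' (fun x => ⟨x.2, x.1 - x.2⟩) (fun x => ⟨x.1 + x.2, x.1⟩)
    ?_ ?_ ?_ ?_ ?_
  · rintro ⟨a, b⟩ hab
    simp only [mem_sigma, mem_range] at hab ⊢
    omega
  · rintro ⟨a, b⟩ hab
    simp only [mem_sigma, mem_range] at hab ⊢
    omega
  · rintro ⟨a, b⟩ hab
    simp only [mem_sigma, mem_range] at hab
    have h : b + (a - b) = a := by omega
    simp [h]
  · rintro ⟨a, b⟩ hab
    simp only [mem_sigma, mem_range] at hab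
    simp
  · rintro ⟨a, b⟩ hab
    simp only [mem_sigma, mem_range] at hab
    have h : b + (a - b) = a := by omega
    simp [h]

lemma multinom_choose (k l m : ℕ) :
    multinom k l m = (k + l + m).choose (k + l) * (k + l).choose k := by
  have h1 : (k + l).choose k * k.factorial * l.factorial = (k + l).factorial := by
    have := Nat.choose_mul_factorial_mul_factorial (Nat.le_add_right k l)
    simpa using this
  have h2 : (k + l + m).choose (k + l) * (k + l).factorial * m.factorial
      = (k + l + m).factorial := by
    have := Nat.choose_mul_factorial_mul_factorial (Nat.le_add_right (k + l) m)
    simpa using this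
  refine Nat.div_eq_of_eq_mul_left ?_ ?_
  · positivity
  · rw [← h2, ← h1]; ring

/-- Identity between the two expressions (a-2(1)) and (a-2(2)) for `I(Λ²₃²)`. -/
theorem stmt_11 (d : ℕ) (hd : Odd d) (hd0 : 0 < d) (χ : ℤ → ℂ)
    (hper : ∀ a : ℤ, χ (a + d) = χ a)
    (hmul : ∀ a b : ℤ, χ (a * b) = χ a * χ b) (hone : χ 1 = 1)
    (hvan : ∀ a : ℤ, 1 < Int.gcd a d → χ a = 0)
    (E : ℕ → ℂ → ℂ) (hE : IsGenEuler d χ E)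
    (w1 w2 w3 : ℕ) (hw1 : 0 < w1) (hw2 : 0 < w2) (hw3 : 0 < w3)
    (hw1o : Odd w1) (hw2o : Odd w2) (hw3o : Odd w3)
    (y1 : ℂ) (n : ℕ) :
    (∑ k ∈ range (n + 1), ∑ l ∈ range (n + 1 - k),
      (multinom k l (n - k - l) : ℂ) * E k ((w1 : ℂ) * y1) *
        altPowSum χ l (w2 * d - 1) * altPowSum χ (n - k - l) (w3 * d - 1) *
        (w1 : ℂ) ^ (l + (n - k - l)) * (w2 : ℂ) ^ (k + (n - k - l)) * (w3 : ℂ) ^ (k + l))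
    = (w2 : ℂ) ^ n * ∑ k ∈ range (n + 1),
        (n.choose k : ℂ) *
          (∑ a ∈ range (w2 * d), (-1 : ℂ) ^ a * χ (a : ℤ) *
            E k ((w1 : ℂ) * y1 + (w1 : ℂ) / (w2 : ℂ) * (a : ℂ))) *
          altPowSum χ (n - k) (w3 * d - 1) * (w1 : ℂ) ^ (n - k) * (w3 : ℂ) ^ k := by
  have hrange : w2 * d - 1 + 1 = w2 * d := Nat.succ_pred_eq_of_pos (Nat.mul_pos hw2 hd0)
  set X : ℂ := (w1 : ℂ) * y1 with hX
  set t : ℂ := (w1 : ℂ) / (w2 : ℂ) with ht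
  have inner : ∀ k : ℕ,
      (∑ a ∈ range (w2 * d), (-1 : ℂ) ^ a * χ (a : ℤ) * E k (X + t * (a : ℂ)))
      = ∑ j ∈ range (k + 1),
          (k.choose j : ℂ) * E j X * t ^ (k - j) * altPowSum χ (k - j) (w2 * d - 1) := by
    intro k
    calc (∑ a ∈ range (w2 * d), (-1 : ℂ) ^ a * χ (a : ℤ) * E k (X + t * (a : ℂ)))
        = ∑ a ∈ range (w2 * d), ∑ j ∈ range (k + 1),
            (k.choose j : ℂ) * E j X * t ^ (k - j) *
              ((-1 : ℂ) ^ a * χ (a : ℤ) * (a : ℂ) ^ (k - j)) := by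
          refine Finset.sum_congr rfl fun a _ => ?_
          rw [euler_add hE X (t * (a : ℂ)) k, Finset.mul_sum]
          refine Finset.sum_congr rfl fun j _ => ?_
          rw [mul_pow]; ring
      _ = ∑ j ∈ range (k + 1), ∑ a ∈ range (w2 * d),
            (k.choose j : ℂ) * E j X * t ^ (k - j) *
              ((-1 : ℂ) ^ a * χ (a : ℤ) * (a : ℂ) ^ (k - j)) := Finset.sum_comm
      _ = ∑ j ∈ range (k + 1),
            (k.choose j : ℂ) * E j X * t ^ (k - j) * altPowSum χ (k - j) (w2 * d - 1) := by
          refine Finset.sum_congr rfl fun j _ => ?_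
          rw [altPowSum, hrange, Finset.mul_sum]
  symm
  calc (w2 : ℂ) ^ n * ∑ k ∈ range (n + 1),
        (n.choose k : ℂ) *
          (∑ a ∈ range (w2 * d), (-1 : ℂ) ^ a * χ (a : ℤ) * E k (X + t * (a : ℂ))) *
          altPowSum χ (n - k) (w3 * d - 1) * (w1 : ℂ) ^ (n - k) * (w3 : ℂ) ^ k
      = (w2 : ℂ) ^ n * ∑ k ∈ range (n + 1), ∑ j ∈ range (k + 1),
          (n.choose k : ℂ) *
            ((k.choose j : ℂ) * E j X * t ^ (k - j) * altPowSum χ (k - j) (w2 * d - 1)) *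
            altPowSum χ (n - k) (w3 * d - 1) * (w1 : ℂ) ^ (n - k) * (w3 : ℂ) ^ k := by
        congr 1
        refine Finset.sum_congr rfl fun k _ => ?_
        rw [inner k, Finset.mul_sum, Finset.sum_mul, Finset.sum_mul, Finset.sum_mul]
    _ = (w2 : ℂ) ^ n * ∑ j ∈ range (n + 1), ∑ l ∈ range (n + 1 - j),
          (n.choose (j + l) : ℂ) *
            (((j + l).choose j : ℂ) * E j X * t ^ (j + l - j) *
              altPowSum χ (j + l - j) (w2 * d - 1)) *
            altPowSum χ (n - (j + l)) (w3 * d - 1) * (w1 : ℂ) ^ (n - (j + l)) *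
            (w3 : ℂ) ^ (j + l) := by
        rw [tri n (fun k j => (n.choose k : ℂ) *
          ((k.choose j : ℂ) * E j X * t ^ (k - j) * altPowSum χ (k - j) (w2 * d - 1)) *
          altPowSum χ (n - k) (w3 * d - 1) * (w1 : ℂ) ^ (n - k) * (w3 : ℂ) ^ k)]
    _ = ∑ k ∈ range (n + 1), ∑ l ∈ range (n + 1 - k),
          (multinom k l (n - k - l) : ℂ) * E k X *
            altPowSum χ l (w2 * d - 1) * altPowSum χ (n - k - l) (w3 * d - 1) *
            (w1 : ℂ) ^ (l + (n - k - l)) * (w2 : ℂ) ^ (k + (n - k - l)) *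
            (w3 : ℂ) ^ (k + l) := by
        rw [Finset.mul_sum]
        refine Finset.sum_congr rfl fun j hj => ?_
        rw [Finset.mul_sum]
        refine Finset.sum_congr rfl fun l hl => ?_
        have hj' : j ≤ n := Nat.lt_succ_iff.mp (Finset.mem_range.mp hj)
        have hl' : j + l ≤ n := by
          have := Finset.mem_range.mp hl; omega
        have hmn : multinom j l (n - j - l) = n.choose (j + l) * (j + l).choose j := by
          have h : j + l + (n - j - l) = n := by omega
          rw [multinom_choose, h]
        have e1 : j + l - j = l := by omega
        have e2 : n - (j + l) = n - j - l := by omega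
        have e3 : j + (n - j - l) = n - l := by omega
        have hw2' : (w2 : ℂ) ≠ 0 := Nat.cast_ne_zero.mpr hw2.ne'
        have hw2n : (w2 : ℂ) ^ n = (w2 : ℂ) ^ (n - l) * (w2 : ℂ) ^ l := by
          rw [← pow_add]; congr 1; omega
        rw [e1, e2, hmn, Nat.cast_mul, e3, ht, div_pow, hw2n,
          pow_add (w1 : ℂ) l (n - j - l)]
        field_simp
end
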